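/- The residue at s = 1 of ζ(s)^2 x^s / s equals x(log x + 2γ − 1) for every x > 0, where γ is the Euler–Mascheroni constant. -/

import Mathlib

open Complex Filter

private lemma analyticAt_dslope' {f : ℂ → ℂ} {c : ℂ} (hf : AnalyticAt ℂ f c) :
    AnalyticAt ℂ (dslope f c) c := by
  obtain ⟨p, hp⟩ := hf
  exact hp.has_fpower_series_dslope_fslope.analyticAt

private lemma eq_add_dslope {f : ℂ → ℂ} {c s : ℂ} (hs : s ≠ c) :
    f s = f c + (s - c) * dslope f c s := by
  rw [dslope_of_ne _ hs, slope_def_field]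
  field_simp [sub_ne_zero.mpr hs]
  ring

private lemma key_algebra (x d g A B C D h t : ℂ) (ht : t ≠ 0) (eA : A = x + t*B)
    (eB : B = d + t*C) (eP : h*A = g*x + t*D) :
    (1/t + h)^2 * A = x/t^2 + (d + 2*g*x)/t + (C + 2*D + h^2*A) := by
  field_simp
  linear_combination eA + t * eB + 2*t * eP

/-- The residue at `s = 1` of `ζ(s)² x^s / s` equals `x (log x + 2γ − 1)` for `x > 0`:
the function has a pole of order two at `s = 1`, i.e. near `s = 1` it can be written as
`a/(s-1)² + R/(s-1) + g(s)` with `g` analytic at `1`, and the residue `R` (the coefficient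
of `1/(s-1)`) equals `x (log x + 2γ − 1)`. -/
theorem residue_zeta_sq_at_one (x : ℝ) (hx : 0 < x) :
    ∃ (a : ℂ) (g : ℂ → ℂ), AnalyticAt ℂ g 1 ∧
      ∀ᶠ s : ℂ in nhdsWithin 1 {(1 : ℂ)}ᶜ,
        riemannZeta s ^ 2 * (x : ℂ) ^ s / s =
          a / (s - 1) ^ 2 +
            ((x * (Real.log x + 2 * Real.eulerMascheroniConstant - 1) : ℝ) : ℂ) / (s - 1) +
            g s := by
  have hxC : (x:ℂ) ≠ 0 := by exact_mod_cast hx.ne'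
  -- the analytic function F s = x^s / s
  set F : ℂ → ℂ := fun s => (x:ℂ) ^ s / s with hFdef
  have hFa : AnalyticAt ℂ F 1 := by
    refine AnalyticAt.div ?_ analyticAt_id one_ne_zero
    have h : (fun s : ℂ => (x:ℂ) ^ s) = fun s => Complex.exp (Complex.log x * s) := by
      funext s; rw [Complex.cpow_def_of_ne_zero hxC]
    rw [show (HPow.hPow (x:ℂ) : ℂ → ℂ) = fun s => Complex.exp (Complex.log x * s) from h]
    exact (analyticAt_const.mul analyticAt_id).cexp
  have hF1 : F 1 = (x:ℂ) := by simp [hFdef]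
  have hFd : deriv F 1 = (x:ℂ) * Complex.log x - x := by
    have h1 : HasDerivAt (fun s : ℂ => (x:ℂ) ^ s) ((x:ℂ) ^ (1:ℂ) * Complex.log x * 1) 1 :=
      (hasDerivAt_id 1).const_cpow (Or.inl hxC)
    have h2 := h1.div (hasDerivAt_id 1) one_ne_zero
    have h3 : HasDerivAt F ((x:ℂ) * Complex.log x - x) 1 := by
      have h4 : HasDerivAt ((fun s : ℂ => (x:ℂ) ^ s) / id) ((x:ℂ) * Complex.log x - x) 1 := by
        simpa using h2
      exact h4
    exact h3.deriv
  -- the analytic function H with ζ s = 1/(s-1) + H s, H 1 = γ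
  set Z : ℂ → ℂ := fun s => riemannZeta s - 1 / (s - 1) with hZ
  set H : ℂ → ℂ := Function.update Z 1 Real.eulerMascheroniConstant with hHdef
  have hHeq : ∀ s : ℂ, s ≠ 1 → H s = riemannZeta s - 1 / (s - 1) := fun s hs =>
    Function.update_of_ne hs _ _
  have hH1 : H 1 = (Real.eulerMascheroniConstant : ℂ) := Function.update_self _ _ _
  have htd : Tendsto Z (nhdsWithin 1 {(1:ℂ)}ᶜ) (nhds (Real.eulerMascheroniConstant : ℂ)) :=
    tendsto_riemannZeta_sub_one_div
  have hct : ContinuousAt H 1 := by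
    rw [ContinuousAt, hH1, ← nhdsNE_sup_pure, tendsto_sup]
    constructor
    · refine htd.congr' ?_
      filter_upwards [self_mem_nhdsWithin] with s hs
      exact (hHeq s hs).symm
    · rw [tendsto_pure_left]
      intro s hs
      simpa [hH1] using mem_of_mem_nhds hs
  have hHa : AnalyticAt ℂ H 1 := by
    apply Complex.analyticAt_of_differentiable_on_punctured_nhds_of_continuousAt _ hct
    filter_upwards [self_mem_nhdsWithin] with s hs
    have hs1 : s ≠ 1 := hs
    have hopen : {(1:ℂ)}ᶜ ∈ nhds s := (isOpen_compl_singleton).mem_nhds hs1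
    have heq : Z =ᶠ[nhds s] H := by
      filter_upwards [hopen] with t ht
      exact (hHeq t ht).symm
    refine DifferentiableAt.congr_of_eventuallyEq ?_ heq.symm
    exact (differentiableAt_riemannZeta hs1).sub
      ((differentiableAt_const _).div ((differentiableAt_id.sub_const 1)) (sub_ne_zero.mpr hs1))
  -- the product P = H * F
  set P : ℂ → ℂ := fun s => H s * F s with hPdef
  have hPa : AnalyticAt ℂ P 1 := hHa.mul hFa
  have hP1 : P 1 = (Real.eulerMascheroniConstant : ℂ) * x := by rw [hPdef]; simp [hH1, hF1]
  -- auxiliary analytic functions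
  set B : ℂ → ℂ := dslope F 1 with hBdef
  set C : ℂ → ℂ := dslope B 1 with hCdef
  set D : ℂ → ℂ := dslope P 1 with hDdef
  refine ⟨(x:ℂ), fun s => C s + 2 * D s + H s ^ 2 * F s, ?_, ?_⟩
  · exact ((analyticAt_dslope' (analyticAt_dslope' hFa)).add
      (analyticAt_const.mul (analyticAt_dslope' hPa))).add ((hHa.pow 2).mul hFa)
  · filter_upwards [self_mem_nhdsWithin] with s hs
    have hs1 : s ≠ 1 := hs
    have ht : s - 1 ≠ 0 := sub_ne_zero.mpr hs1
    have hzeta : riemannZeta s = 1 / (s - 1) + H s := by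
      rw [hHeq s hs1]; ring
    have eA : F s = (x:ℂ) + (s - 1) * B s := by
      rw [hBdef, ← hF1]; exact eq_add_dslope hs1
    have eB : B s = ((x:ℂ) * Complex.log x - x) + (s - 1) * C s := by
      have := eq_add_dslope (f := B) (c := 1) hs1
      rwa [hBdef, dslope_same, hFd, ← hBdef, ← hCdef] at this
    have eP : H s * F s = (Real.eulerMascheroniConstant : ℂ) * x + (s - 1) * D s := by
      have := eq_add_dslope (f := P) (c := 1) hs1
      rwa [hP1] at this
    have hres : ((x * (Real.log x + 2 * Real.eulerMascheroniConstant - 1) : ℝ) : ℂ)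
        = ((x:ℂ) * Complex.log x - x) + 2 * (Real.eulerMascheroniConstant : ℂ) * (x:ℂ) := by
      rw [← Complex.ofReal_log hx.le]
      push_cast
      ring
    have key := key_algebra (x:ℂ) ((x:ℂ) * Complex.log x - x)
      (Real.eulerMascheroniConstant : ℂ) (F s) (B s) (C s) (D s) (H s) (s - 1)
      ht eA eB eP
    calc riemannZeta s ^ 2 * (x : ℂ) ^ s / s = (1 / (s - 1) + H s) ^ 2 * F s := by
          rw [hzeta, hFdef]; ring
      _ = (x:ℂ) / (s - 1) ^ 2
          + (((x:ℂ) * Complex.log x - x) + 2 * (Real.eulerMascheroniConstant : ℂ) * x) / (s - 1)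
          + (C s + 2 * D s + H s ^ 2 * F s) := by rw [key]
      _ = _ := by rw [hres]
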